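/- If n ≡ 0 or 1 (mod 4), then there are no integers k and δ satisfying k² + k(δ + 1 - n) + δ² + δ + 1 = 0. -/
import Mathlib


/-- If `n ≡ 0` or `1 (mod 4)`, there are no integers `k`, `δ` with
`k² + k(δ + 1 - n) + δ² + δ + 1 = 0`. -/
theorem stmt_1 (n : ℤ) (hn : n % 4 = 0 ∨ n % 4 = 1) (k δ : ℤ) :
    k ^ 2 + k * (δ + 1 - n) + δ ^ 2 + δ + 1 ≠ 0 := by
  intro h
  have h4 : (k ^ 2 + k * (δ + 1 - n) + δ ^ 2 + δ + 1) % 4 = 0 := by rw [h]; rfl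
  have hk := Int.emod_emod_of_dvd k (by norm_num : (2:ℤ) ∣ 4)
  have hd := Int.emod_emod_of_dvd δ (by norm_num : (2:ℤ) ∣ 4)
  have hk4 : k % 4 = 0 ∨ k % 4 = 1 ∨ k % 4 = 2 ∨ k % 4 = 3 := by omega
  have hd4 : δ % 4 = 0 ∨ δ % 4 = 1 ∨ δ % 4 = 2 ∨ δ % 4 = 3 := by omega
  have e : k ^ 2 + k * (δ + 1 - n) + δ ^ 2 + δ + 1
      = k*k + k*δ + k - k*n + δ*δ + δ + 1 := by ring
  rw [e] at h4
  have h1 : (k*k) % 4 = (k%4)*(k%4) % 4 := by rw [Int.mul_emod]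
  have h2 : (k*δ) % 4 = (k%4)*(δ%4) % 4 := by rw [Int.mul_emod]
  have h3 : (k*n) % 4 = (k%4)*(n%4) % 4 := by rw [Int.mul_emod]
  have h5 : (δ*δ) % 4 = (δ%4)*(δ%4) % 4 := by rw [Int.mul_emod]
  rcases hn with hn | hn <;> rcases hk4 with hk4 | hk4 | hk4 | hk4 <;>
    rcases hd4 with hd4 | hd4 | hd4 | hd4 <;>
    simp only [hn, hk4, hd4] at h1 h2 h3 h5 <;> omega
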